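/- Let n be a natural number and let E be a rationally defined ℂ-submodule of (Fin n → ℂ). Let exp(E) ⊆ (Fin n → ℂ) denote the image of E under the componentwise exponential, exp(E) = {(fun i => Complex.exp (z i)) | z ∈ E}, and write 𝟙 for the constant function with value 1. Then both the exponential tangent cone and the tangent cone of exp(E) at 𝟙 recover E: ETC₁(exp(E)) = E and tangentConeAt ℂ (exp(E)) 𝟙 = E. (This is the concrete content of the final assertion of Theorem 2.1 of the paper: for a component W = exp(E) with E defined over ℚ, the tangent cone of W at 1 is the linear subspace E.) -/

import Mathlib

/-- A ℂ-submodule of `Fin n → ℂ` is rationally defined if it is spanned by a set of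
vectors all of whose coordinates are rational. -/
def RationallyDefined {n : ℕ} (V : Submodule ℂ (Fin n → ℂ)) : Prop :=
  ∃ T : Set (Fin n → ℂ),
    (∀ v ∈ T, ∀ i, ∃ q : ℚ, v i = (q : ℂ)) ∧ V = Submodule.span ℂ T

/-- The image of a subset of `Fin n → ℂ` under the componentwise exponential map. -/
def expSet {n : ℕ} (E : Set (Fin n → ℂ)) : Set (Fin n → ℂ) :=
  (fun z i => Complex.exp (z i)) '' E

open Complex Filter Topology Finset

noncomputable section

private lemma exists_rat_rows (n : ℕ) (E : Submodule ℂ (Fin n → ℂ))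
    (hE : RationallyDefined E) :
    ∃ P : Matrix (Fin n) (Fin n) ℚ, ∀ x : Fin n → ℂ,
      x ∈ E ↔ ∀ i, ∑ j, (P i j : ℂ) * x j = 0 := by
  obtain ⟨T, hTrat, rfl⟩ := hE
  set ι : (Fin n → ℚ) →ₗ[ℚ] (Fin n → ℂ) :=
    { toFun := fun w i => (w i : ℂ)
      map_add' := by intro a b; funext i; push_cast; simp
      map_smul' := by
        intro q a; funext i
        simp only [Pi.smul_apply, smul_eq_mul, RingHom.id_apply, Rat.smul_def]
        push_cast; ring } with hι
  set S : Set (Fin n → ℚ) := {w | ι w ∈ T} with hS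
  have hTS : T = ι '' S := by
    ext v; constructor
    · intro hv
      choose q hq using hTrat v hv
      have hveq : v = ι q := funext fun i => hq i
      exact ⟨q, by rw [hS]; exact Set.mem_setOf.mpr (hveq ▸ hv), hveq.symm⟩
    · rintro ⟨w, hw, rfl⟩; exact hw
  set K : Submodule ℚ (Fin n → ℚ) := Submodule.span ℚ S with hK
  have hKE : ∀ w ∈ K, ι w ∈ Submodule.span ℂ T := by
    have hle : K ≤ Submodule.comap ι ((Submodule.span ℂ T).restrictScalars ℚ) :=
      Submodule.span_le.mpr fun w hw => by
        simpa using Submodule.subset_span (hTS ▸ Set.mem_image_of_mem ι hw)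
    exact fun w hw => hle hw
  obtain ⟨q, hq⟩ := K.exists_isCompl
  set pr : (Fin n → ℚ) →ₗ[ℚ] (Fin n → ℚ) :=
    q.subtype.comp (q.projectionOnto K hq.symm) with hpr
  have hker : ∀ w ∈ K, pr w = 0 := fun w hw => by
    simp [hpr, Submodule.projectionOnto_apply_of_mem_right hq.symm hw]
  have hsub : ∀ w, w - pr w ∈ K := by
    intro w
    have h1 := Submodule.projection_add_projection_eq_self hq w
    have : w - pr w = (K.projectionOnto q hq w : Fin n → ℚ) := by
      have h2 : pr w = (q.projectionOnto K hq.symm w : Fin n → ℚ) := by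
        rw [hpr]; rfl
      rw [h2]
      exact sub_eq_of_eq_add h1.symm
    rw [this]; exact Submodule.coe_mem _
  set e : Fin n → (Fin n → ℚ) := fun j => Pi.single j 1 with he
  have hsum : ∀ w : Fin n → ℚ, pr w = ∑ j, w j • pr (e j) := by
    intro w
    have hw : w = ∑ j, w j • e j := by
      funext i
      rw [Finset.sum_apply]
      simp [he, Pi.single_apply, smul_eq_mul]
    conv_lhs => rw [hw]
    rw [map_sum]
    simp [map_smul]
  refine ⟨fun i j => pr (e j) i, fun x => ?_⟩
  constructor
  · intro hx i
    have hlin : x ∈ Submodule.span ℂ T → (∑ j, ((pr (e j) i : ℚ) : ℂ) * x j) = 0 := by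
      set L : (Fin n → ℂ) →ₗ[ℂ] ℂ :=
        { toFun := fun x => ∑ j, ((pr (e j) i : ℚ) : ℂ) * x j
          map_add' := by intro a b; simp [mul_add, Finset.sum_add_distrib]
          map_smul' := by
            intro c a
            simp only [Pi.smul_apply, smul_eq_mul, RingHom.id_apply, Finset.mul_sum]
            exact Finset.sum_congr rfl fun j _ => by ring }
      intro hx
      have : Submodule.span ℂ T ≤ LinearMap.ker L := by
        rw [Submodule.span_le]
        intro v hv
        obtain ⟨w, hwS, rfl⟩ := hTS ▸ hv
        have hwK : w ∈ K := Submodule.subset_span hwS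
        have h0 : ∑ j, w j * pr (e j) i = 0 := by
          have h1 := congrFun (hker w hwK) i
          rw [hsum w] at h1
          rw [Finset.sum_apply] at h1
          simpa [smul_eq_mul] using h1
        have hιapp : ∀ (w : Fin n → ℚ) (j : Fin n), ι w j = ((w j : ℚ) : ℂ) := fun _ _ => rfl
        have : L (ι w) = (((∑ j, w j * pr (e j) i : ℚ)) : ℂ) := by
          show (∑ j, ((pr (e j) i : ℚ) : ℂ) * ι w j) = _
          push_cast
          exact Finset.sum_congr rfl fun j _ => by rw [hιapp]; ring
        simp [LinearMap.mem_ker, this, h0]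
      exact this hx
    exact hlin hx
  · intro h0
    have hxeq : x = ∑ j, x j • ι (e j - pr (e j)) := by
      funext i
      rw [Finset.sum_apply]
      have h1 : ∑ j, x j * ((e j i : ℚ) : ℂ) = x i := by
        simp [he, Pi.single_apply, apply_ite (fun q : ℚ => (q : ℂ)), mul_ite,
          Finset.sum_ite_eq]
      have h2 : ∑ j, x j * ((pr (e j) i : ℚ) : ℂ) = 0 := by
        rw [← h0 i]
        exact Finset.sum_congr rfl fun j _ => mul_comm _ _
      have : ∀ j, (x j • ι (e j - pr (e j))) i
          = x j * ((e j i : ℚ) : ℂ) - x j * ((pr (e j) i : ℚ) : ℂ) := by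
        intro j
        simp [hι, Pi.sub_apply, smul_eq_mul]
        push_cast
        ring
      rw [Finset.sum_congr rfl fun j _ => this j, Finset.sum_sub_distrib, h1, h2, sub_zero]
    rw [hxeq]
    exact Submodule.sum_mem _ fun j _ =>
      Submodule.smul_mem _ _ (hKE _ (hsub (e j)))

private lemma rat_sum_den_bound {n : ℕ} (c : Fin n → ℚ) (m : Fin n → ℤ)
    (h : (∑ j, c j * (m j : ℚ)) ≠ 0) :
    1 / (∏ j, ((c j).den : ℚ)) ≤ |∑ j, c j * (m j : ℚ)| := by
  set r : ℚ := ∑ j, c j * (m j : ℚ) with hr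
  set D : ℚ := ∏ j, ((c j).den : ℚ) with hD
  have hDpos : 0 < D := Finset.prod_pos fun j _ => by exact_mod_cast (c j).pos
  obtain ⟨z, hz⟩ : ∃ z : ℤ, r * D = (z : ℚ) := by
    refine ⟨∑ j, (c j).num * m j * ∏ k ∈ Finset.univ.erase j, ((c k).den : ℤ), ?_⟩
    rw [hr, hD, Finset.sum_mul]
    push_cast
    refine Finset.sum_congr rfl fun j _ => ?_
    rw [← Finset.mul_prod_erase _ _ (Finset.mem_univ j), ← Rat.mul_den_eq_num]
    ring
  have hz0 : z ≠ 0 := by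
    rintro rfl
    rw [Int.cast_zero] at hz
    rcases mul_eq_zero.mp hz with h1 | h2
    · exact h h1
    · exact hDpos.ne' h2
  have h1 : (1 : ℚ) ≤ |r| * D := by
    calc (1 : ℚ) ≤ |(z : ℚ)| := by exact_mod_cast Int.one_le_abs hz0
      _ = |r * D| := by rw [hz]
      _ = |r| * D := by rw [abs_mul, abs_of_pos hDpos]
  rw [div_le_iff₀ hDpos]
  exact h1

private lemma etc_row {n : ℕ} (E : Submodule ℂ (Fin n → ℂ)) (c : Fin n → ℚ)
    (hvan : ∀ x ∈ E, ∑ j, (c j : ℂ) * x j = 0) (α : Fin n → ℂ)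
    (hα : ∀ t : ℂ, (fun i => Complex.exp (t * α i)) ∈ expSet (E : Set (Fin n → ℂ))) :
    ∑ j, (c j : ℂ) * α j = 0 := by
  by_contra hL
  set L : ℂ := ∑ j, (c j : ℂ) * α j with hLdef
  set t : ℂ := 2 * (Real.pi : ℂ) * I * (Real.sqrt 2 : ℝ) / L with ht
  obtain ⟨z, hzE, hz⟩ := hα t
  choose m hm using fun i => Complex.exp_eq_exp_iff_exists_int.mp (congrFun hz i)
  set rr : ℚ := ∑ j, c j * (m j : ℚ) with hrr
  have hrrc : ((rr : ℚ) : ℂ) = ∑ j, (c j : ℂ) * (m j : ℂ) := by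
    rw [hrr]; push_cast; rfl
  have hA : ∑ j, (c j : ℂ) * (t * α j) = t * L := by
    rw [hLdef, Finset.mul_sum]
    exact Finset.sum_congr rfl fun j _ => by ring
  have h0 : t * L + ((rr : ℚ) : ℂ) * (2 * (Real.pi : ℂ) * I) = 0 := by
    calc t * L + ((rr : ℚ) : ℂ) * (2 * (Real.pi : ℂ) * I)
        = ∑ j, ((c j : ℂ) * (t * α j) + ((c j : ℂ) * (m j : ℂ)) * (2 * (Real.pi : ℂ) * I)) := by
          rw [Finset.sum_add_distrib, hA, ← Finset.sum_mul, hrrc]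
      _ = ∑ j, (c j : ℂ) * z j := Finset.sum_congr rfl fun j _ => by
          rw [hm j]; push_cast; ring
      _ = 0 := hvan z hzE
  have h3 : t * L = 2 * (Real.pi : ℂ) * I * (Real.sqrt 2 : ℝ) := div_mul_cancel₀ _ hL
  have h2pi : (2 * (Real.pi : ℂ) * I) ≠ 0 := by
    simp [Real.pi_ne_zero, Complex.I_ne_zero, Complex.ofReal_ne_zero]
  have hfac : (((Real.sqrt 2 : ℝ) : ℂ) + ((rr : ℚ) : ℂ)) * (2 * (Real.pi : ℂ) * I) = 0 := by
    linear_combination h0 - h3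
  rcases mul_eq_zero.mp hfac with h | h
  · have : (Real.sqrt 2 : ℝ) = ((-rr : ℚ) : ℝ) := by
      have := eq_neg_of_add_eq_zero_left h
      push_cast at this ⊢
      exact_mod_cast this
    exact irrational_sqrt_two ⟨-rr, this.symm⟩
  · exact h2pi h

private lemma tangent_row {n : ℕ} (E : Submodule ℂ (Fin n → ℂ)) (c : Fin n → ℚ)
    (hvan : ∀ x ∈ E, ∑ j, (c j : ℂ) * x j = 0) (y : Fin n → ℂ)
    (cs : ℕ → ℂ) (d : ℕ → Fin n → ℂ)
    (hmem : ∀ᶠ k in atTop, (fun _ => (1 : ℂ)) + d k ∈ expSet (E : Set (Fin n → ℂ)))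
    (hcs : Tendsto (fun k => ‖cs k‖) atTop atTop)
    (hlim : Tendsto (fun k => cs k • d k) atTop (𝓝 y)) :
    ∑ j, (c j : ℂ) * y j = 0 := by
  have hd0 : Tendsto d atTop (𝓝 0) := tangentConeAt.lim_zero atTop hcs hlim
  have hdj : ∀ j, Tendsto (fun k => d k j) atTop (𝓝 0) := fun j => by
    have := tendsto_pi_nhds.mp hd0 j
    simpa using this
  have hclimj : ∀ j, Tendsto (fun k => cs k * d k j) atTop (𝓝 (y j)) := fun j => by
    have := tendsto_pi_nhds.mp hlim j
    simpa [smul_eq_mul] using this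
  set A : ℕ → ℂ := fun k => cs k * ∑ j, (c j : ℂ) * Complex.log (1 + d k j) with hA
  set ly : ℂ := ∑ j, (c j : ℂ) * y j with hly
  -- (1) A tends to ly
  have hterm : ∀ j, Tendsto (fun k => cs k * (Complex.log (1 + d k j) - d k j)) atTop (𝓝 0) := by
    intro j
    apply squeeze_zero_norm' (a := fun k => ‖cs k * d k j‖ * ‖d k j‖)
    · have hsmall : ∀ᶠ k in atTop, ‖d k j‖ ≤ 1 / 2 := by
        have hn : Tendsto (fun k => ‖d k j‖) atTop (𝓝 0) := by
          simpa using (hdj j).norm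
        exact hn.eventually_le_const (by norm_num)
      filter_upwards [hsmall] with k hk
      have h1 : ‖d k j‖ < 1 := lt_of_le_of_lt hk (by norm_num)
      have h2 := Complex.norm_log_one_add_sub_self_le h1
      have h5 : (0 : ℝ) < 1 - ‖d k j‖ := by linarith
      have h4 : (1 - ‖d k j‖)⁻¹ ≤ 2 := by
        rw [inv_le_comm₀ h5 (by norm_num)]
        linarith
      have h6 : ‖Complex.log (1 + d k j) - d k j‖ ≤ ‖d k j‖ ^ 2 := by
        calc ‖Complex.log (1 + d k j) - d k j‖ ≤ ‖d k j‖ ^ 2 * (1 - ‖d k j‖)⁻¹ / 2 := h2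
          _ ≤ ‖d k j‖ ^ 2 * 2 / 2 := by gcongr
          _ = ‖d k j‖ ^ 2 := by ring
      calc ‖cs k * (Complex.log (1 + d k j) - d k j)‖
          = ‖cs k‖ * ‖Complex.log (1 + d k j) - d k j‖ := norm_mul _ _
        _ ≤ ‖cs k‖ * ‖d k j‖ ^ 2 := by gcongr
        _ = ‖cs k * d k j‖ * ‖d k j‖ := by rw [norm_mul]; ring
    · have := (hclimj j).norm.mul (hdj j).norm
      simpa using this
  have hAtend : Tendsto A atTop (𝓝 ly) := by
    have hsplit : ∀ k, A k = (∑ j, (c j : ℂ) * (cs k * d k j))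
        + ∑ j, (c j : ℂ) * (cs k * (Complex.log (1 + d k j) - d k j)) := by
      intro k
      have hAk : A k = cs k * ∑ j, (c j : ℂ) * Complex.log (1 + d k j) := rfl
      rw [hAk, Finset.mul_sum, ← Finset.sum_add_distrib]
      exact Finset.sum_congr rfl fun j _ => by ring
    have h1 : Tendsto (fun k => ∑ j, (c j : ℂ) * (cs k * d k j)) atTop (𝓝 ly) := by
      rw [hly]
      exact tendsto_finset_sum _ fun j _ => (hclimj j).const_mul _
    have h2 : Tendsto (fun k => ∑ j, (c j : ℂ) * (cs k * (Complex.log (1 + d k j) - d k j)))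
        atTop (𝓝 0) := by
      have := tendsto_finset_sum Finset.univ fun j (_ : j ∈ Finset.univ) => (hterm j).const_mul ((c j : ℂ))
      simpa using this
    have := h1.add h2
    rw [add_zero] at this
    exact this.congr fun k => (hsplit k).symm
  -- (2) A is eventually of the quantized form
  set D : ℚ := ∏ j, ((c j).den : ℚ) with hD
  have hDpos : (0 : ℚ) < D := Finset.prod_pos fun j _ => by exact_mod_cast (c j).pos
  have hAev : ∀ᶠ k in atTop, ∃ r : ℚ,
      A k = cs k * ((r : ℂ) * (2 * (Real.pi : ℂ) * I)) ∧ (r = 0 ∨ 1 / D ≤ |r|) := by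
    filter_upwards [hmem] with k hk
    obtain ⟨z, hzE, hz⟩ := hk
    have hexp : ∀ i, Complex.exp (z i) = 1 + d k i := fun i => congrFun hz i
    have hne : ∀ i, (1 : ℂ) + d k i ≠ 0 := fun i => (hexp i) ▸ Complex.exp_ne_zero _
    have hloge : ∀ i, Complex.exp (Complex.log (1 + d k i)) = Complex.exp (z i) := fun i => by
      rw [Complex.exp_log (hne i), hexp i]
    choose m hm using fun i => Complex.exp_eq_exp_iff_exists_int.mp (hloge i)
    refine ⟨∑ j, c j * (m j : ℚ), ?_, ?_⟩
    · have hAk : A k = cs k * ∑ j, (c j : ℂ) * Complex.log (1 + d k j) := rfl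
      rw [hAk]
      congr 1
      calc ∑ j, (c j : ℂ) * Complex.log (1 + d k j)
          = ∑ j, ((c j : ℂ) * z j + ((c j : ℂ) * (m j : ℂ)) * (2 * (Real.pi : ℂ) * I)) :=
            Finset.sum_congr rfl fun j _ => by rw [hm j]; push_cast; ring
        _ = (∑ j, (c j : ℂ) * (m j : ℂ)) * (2 * (Real.pi : ℂ) * I) := by
            rw [Finset.sum_add_distrib, hvan z hzE, zero_add, ← Finset.sum_mul]
        _ = ((∑ j, c j * (m j : ℚ) : ℚ) : ℂ) * (2 * (Real.pi : ℂ) * I) := by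
            congr 1
            push_cast
            rfl
    · by_cases h0 : (∑ j, c j * (m j : ℚ)) = 0
      · exact Or.inl h0
      · exact Or.inr (rat_sum_den_bound c m h0)
  -- (3) conclude A is eventually 0, so ly = 0
  have hM : ∀ᶠ k in atTop, ‖A k‖ < ‖ly‖ + 1 :=
    hAtend.norm.eventually_lt_const (lt_add_one _)
  have hcsB : ∀ᶠ k in atTop, (‖ly‖ + 1) * ((D : ℝ)) < ‖cs k‖ :=
    hcs.eventually_gt_atTop _
  have hA0 : ∀ᶠ k in atTop, A k = 0 := by
    filter_upwards [hAev, hM, hcsB] with k hk hMk hBk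
    obtain ⟨r, hr, hror⟩ := hk
    rcases hror with h | h
    · rw [hr, h]; simp
    · exfalso
      have hnr : ‖((r : ℚ) : ℂ)‖ = |(r : ℝ)| := by
        rw [show ((r : ℚ) : ℂ) = (((r : ℝ) : ℝ) : ℂ) by push_cast; rfl]
        exact Complex.norm_real _
      have hn2 : ‖(2 * (Real.pi : ℂ) * I)‖ = 2 * Real.pi := by
        rw [norm_mul, norm_mul, Complex.norm_I, Complex.norm_real]
        simp [_root_.abs_of_nonneg Real.pi_nonneg]
      have hnormA : ‖A k‖ = ‖cs k‖ * (|(r : ℝ)| * (2 * Real.pi)) := by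
        rw [hr, norm_mul, norm_mul, hnr, hn2]
      have hrge : 1 / ((D : ℝ)) ≤ |(r : ℝ)| := by exact_mod_cast h
      have hDposR : (0 : ℝ) < (D : ℝ) := by exact_mod_cast hDpos
      have hpi : (3 : ℝ) < Real.pi := Real.pi_gt_three
      have hcs0 : (0 : ℝ) ≤ ‖cs k‖ := norm_nonneg _
      have hly0 : (0 : ℝ) ≤ ‖ly‖ := norm_nonneg _
      have hr1 : 1 ≤ |(r : ℝ)| * (D : ℝ) := by
        rw [div_le_iff₀ hDposR] at hrge
        linarith
      nlinarith [mul_le_mul_of_nonneg_left hr1 hcs0, abs_nonneg ((r : ℝ))]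
  have hA0' : Tendsto A atTop (𝓝 0) :=
    Tendsto.congr' (hA0.mono fun k hk => hk.symm) tendsto_const_nhds
  exact tendsto_nhds_unique hAtend hA0'

end

/-- For a rationally defined subspace `E`, both the exponential tangent cone and the
tangent cone of `exp(E)` at the all-ones point recover `E` (Theorem 2.1 of the paper). -/
theorem tangent_cones_of_exp_of_rational_subspace
    (n : ℕ) (E : Submodule ℂ (Fin n → ℂ)) (hE : RationallyDefined E) :
    {α : Fin n → ℂ | ∀ t : ℂ,
        (fun i => Complex.exp (t * α i)) ∈ expSet (E : Set (Fin n → ℂ))} =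
      (E : Set (Fin n → ℂ)) ∧
    tangentConeAt ℂ (expSet (E : Set (Fin n → ℂ))) (fun _ => (1 : ℂ)) =
      (E : Set (Fin n → ℂ)) := by
  obtain ⟨P, hP⟩ := exists_rat_rows n E hE
  constructor
  · ext α
    simp only [Set.mem_setOf_eq, SetLike.mem_coe]
    constructor
    · intro hα
      rw [hP]
      intro i
      exact etc_row E (P i) (fun x hx => (hP x).mp hx i) α hα
    · intro hα t
      exact ⟨t • α, E.smul_mem t hα, rfl⟩
  · ext y
    simp only [SetLike.mem_coe]
    constructor
    · intro hy
      obtain ⟨cs, d, hcs, hmem, hlim⟩ := mem_tangentConeAt_iff_exists_seq_norm_tendsto_atTop.mp hy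
      rw [hP]
      intro i
      exact tangent_row E (P i) (fun x hx => (hP x).mp hx i) y cs d hmem hcs hlim
    · intro hy
      refine mem_tangentConeAt_iff_exists_seq_norm_tendsto_atTop.mpr ⟨fun k => (k : ℂ) + 1,
        fun k => (fun i => Complex.exp (((k : ℂ) + 1)⁻¹ * y i)) - (fun _ => 1), ?_, ?_, ?_⟩
      swap
      · refine Filter.Eventually.of_forall fun k => ?_
        refine ⟨((k : ℂ) + 1)⁻¹ • y, E.smul_mem _ hy, ?_⟩
        funext i
        simp [Pi.add_apply, Pi.sub_apply, smul_eq_mul]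
      · have heq : (fun k : ℕ => ‖(k : ℂ) + 1‖) = fun k : ℕ => (k : ℝ) + 1 := by
          funext k
          rw [show ((k : ℂ) + 1) = (((k : ℝ) + 1 : ℝ) : ℂ) by push_cast; ring,
            Complex.norm_real]
          exact abs_of_nonneg (by positivity)
        rw [heq]
        exact tendsto_atTop_add_const_right _ 1 tendsto_natCast_atTop_atTop
      · rw [tendsto_pi_nhds]
        intro i
        set g : ℂ → ℂ := fun t => Complex.exp (t * y i) with hg
        have hgd : HasDerivAt g (y i) 0 := by
          have h1 : HasDerivAt (fun t : ℂ => t * y i) (y i) 0 := by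
            simpa using (hasDerivAt_id (0 : ℂ)).mul_const (y i)
          simpa using h1.cexp
        have hslope := hasDerivAt_iff_tendsto_slope.mp hgd
        have htk : Tendsto (fun k : ℕ => ((k : ℂ) + 1)⁻¹) atTop (𝓝[≠] (0 : ℂ)) := by
          rw [tendsto_nhdsWithin_iff]
          constructor
          · have h1 : Tendsto (fun k : ℕ => ((k : ℝ) + 1)⁻¹) atTop (𝓝 0) :=
              tendsto_inv_atTop_zero.comp
                (tendsto_atTop_add_const_right _ 1 tendsto_natCast_atTop_atTop)
            have h2 := (Complex.continuous_ofReal.tendsto 0).comp h1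
            simp only [Complex.ofReal_zero] at h2
            refine Tendsto.congr (fun k => ?_) h2
            simp only [Function.comp_apply]
            push_cast
            ring
          · exact Eventually.of_forall fun k => by
              simp only [Set.mem_compl_iff, Set.mem_singleton_iff]
              exact inv_ne_zero (Nat.cast_add_one_ne_zero k)
        have hcomp := hslope.comp htk
        refine hcomp.congr fun k => ?_
        have hk0 : ((k : ℂ) + 1) ≠ 0 := Nat.cast_add_one_ne_zero k
        simp only [Function.comp_apply]
        rw [slope_def_field, sub_zero]
        have hg0 : g 0 = 1 := by rw [hg]; simp
        have hgk : g (((k : ℂ) + 1)⁻¹) = Complex.exp (((k : ℂ) + 1)⁻¹ * y i) := rfl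
        rw [hg0, hgk, div_inv_eq_mul]
        simp only [Pi.smul_apply, Pi.sub_apply, smul_eq_mul]
        ring
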